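/- Let μ^N be a probability measure on ℝ^d×ℝ^d with spatial marginal ρ^N, let ρ be a probability density on ℝ^d, and let u ∈ (L^∞ ∩ Lip)(ℝ^d;ℝ^d). Then the bounded Lipschitz distance between the second velocity moment of μ^N and ρ u⊗u satisfies: d_BL( ∫_{ℝ^d} (v⊗v) μ^N(·,dv), ρ u⊗u ) ≤ ∫_{ℝ^d×ℝ^d} |v − u(x)|² μ^N(dx,dv) + C ( ∫_{ℝ^d×ℝ^d} |v − u(x)|² μ^N(dx,dv) )^{1/2} + C d_BL(ρ^N, ρ), where C > 0 depends only on ‖u‖_{L^∞} and ‖u‖_{Lip}. -/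

import Mathlib

open MeasureTheory Set Finset
open scoped ENNReal

noncomputable section

/-- The bounded Lipschitz distance between two measures. -/
def dBL {α : Type*} [MeasurableSpace α] [PseudoEMetricSpace α]
    (μ ν : Measure α) : ℝ :=
  sSup { r : ℝ | ∃ φ : α → ℝ, (∀ z, |φ z| ≤ 1) ∧ LipschitzWith 1 φ ∧
    r = |(∫ z, φ z ∂μ) - ∫ z, φ z ∂ν| }

/-- The bounded Lipschitz distance between the (matrix-valued) second velocity moment
`∫ (v⊗v) μ^N(·,dv)` of a phase-space measure `μ^N` and `ρ u⊗u`, applied componentwise: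
the supremum over matrix components `(i,j)` and over bounded Lipschitz test functions
`φ` of `|∫ φ(x) v_i v_j μ^N(dx,dv) − ∫ φ(x) ρ(x) u_i(x) u_j(x) dx|`. -/
def dBLmom2 {d : ℕ} (μ : Measure (EuclideanSpace ℝ (Fin d) × EuclideanSpace ℝ (Fin d)))
    (ρ : EuclideanSpace ℝ (Fin d) → ℝ) (u : EuclideanSpace ℝ (Fin d) → EuclideanSpace ℝ (Fin d)) :
    ℝ :=
  sSup { r : ℝ | ∃ i j : Fin d, ∃ φ : EuclideanSpace ℝ (Fin d) → ℝ,
    (∀ z, |φ z| ≤ 1) ∧ LipschitzWith 1 φ ∧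
    r = |(∫ z, φ z.1 * (z.2 i * z.2 j) ∂μ) - ∫ y, φ y * (ρ y * (u y i * u y j))| }

/-- coordinates are dominated by the Euclidean norm -/
lemma coord_abs_le {d : ℕ} (x : EuclideanSpace ℝ (Fin d)) (i : Fin d) :
    |x i| ≤ ‖x‖ := by
  rw [EuclideanSpace.norm_eq, ← Real.sqrt_sq_eq_abs]
  apply Real.sqrt_le_sqrt
  have := Finset.single_le_sum (f := fun j => ‖x j‖ ^ 2)
    (fun j _ => by positivity) (Finset.mem_univ i)
  simpa [Real.norm_eq_abs, sq_abs] using this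

/-- Cauchy–Schwarz for a probability measure: `∫ f ≤ (∫ f²)^{1/2}`. -/
lemma integral_le_sqrt_integral_sq {α : Type*} [MeasurableSpace α] (μ : Measure α)
    [IsProbabilityMeasure μ] (f : α → ℝ) (h0 : ∀ x, 0 ≤ f x)
    (h1 : Integrable f μ) (h2 : Integrable (fun x => f x ^ 2) μ) :
    ∫ x, f x ∂μ ≤ Real.sqrt (∫ x, f x ^ 2 ∂μ) := by
  set m := ∫ x, f x ∂μ with hm
  have hm0 : 0 ≤ m := integral_nonneg h0
  have hE0 : 0 ≤ ∫ x, f x ^ 2 ∂μ := integral_nonneg fun x => sq_nonneg _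
  rw [Real.le_sqrt hm0 hE0]
  have key : 0 ≤ ∫ x, (f x - m) ^ 2 ∂μ := integral_nonneg fun x => sq_nonneg _
  have expand : ∫ x, (f x - m) ^ 2 ∂μ = (∫ x, f x ^ 2 ∂μ) - 2 * m * m + m ^ 2 := by
    have h3 : (fun x => (f x - m) ^ 2) = fun x => f x ^ 2 - (2 * m) * f x + m ^ 2 :=
      funext fun x => by ring
    have ha : Integrable (fun x => f x ^ 2 - 2 * m * f x) μ := h2.sub (h1.const_mul (2 * m))
    rw [h3, integral_add ha (integrable_const _),
      integral_sub h2 (h1.const_mul _), integral_const_mul, integral_const,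
      probReal_univ]
    simp [← hm]
  nlinarith [key, expand]

set_option maxHeartbeats 1000000

/-- convergence of the local energy: for a probability measure `μ^N`
on phase space with spatial marginal `ρ^N`, a probability density `ρ`, and a bounded
Lipschitz velocity field `u`,
`d_BL(∫ (v⊗v) μ^N(·,dv), ρ u⊗u) ≤ ∫∫|v−u(x)|² μ^N + C (∫∫|v−u(x)|² μ^N)^{1/2} + C d_BL(ρ^N, ρ)`,
with `C` depending only on `‖u‖_{L^∞}` and `‖u‖_{Lip}`. -/
theorem local_energy_convergence
    (d : ℕ) (Cu Lu : ℝ) :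
    ∃ C : ℝ, 0 < C ∧
      ∀ (μ : Measure (EuclideanSpace ℝ (Fin d) × EuclideanSpace ℝ (Fin d))),
        IsProbabilityMeasure μ →
        Integrable (fun z : EuclideanSpace ℝ (Fin d) × EuclideanSpace ℝ (Fin d) => ‖z.2‖ ^ 2) μ →
      ∀ (ρ : EuclideanSpace ℝ (Fin d) → ℝ),
        (∀ y, 0 ≤ ρ y) → Integrable ρ → (∫ y, ρ y) = 1 →
      ∀ (u : EuclideanSpace ℝ (Fin d) → EuclideanSpace ℝ (Fin d)),
        (∀ y, ‖u y‖ ≤ Cu) → LipschitzWith (Real.toNNReal Lu) u →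
        dBLmom2 μ ρ u
          ≤ (∫ z, ‖z.2 - u z.1‖ ^ 2 ∂μ)
            + C * Real.sqrt (∫ z, ‖z.2 - u z.1‖ ^ 2 ∂μ)
            + C * dBL (μ.map Prod.fst)
                (volume.withDensity (fun y => ENNReal.ofReal (ρ y))) := by
  set B : ℝ := |Cu| + 1 with hBdef
  set L : ℝ := |Lu| + 1 with hLdef
  have hB1 : 1 ≤ B := by have := abs_nonneg Cu; simp only [hBdef]; linarith
  have hL1 : 1 ≤ L := by have := abs_nonneg Lu; simp only [hLdef]; linarith
  set M : ℝ := B ^ 2 + 2 * B * L with hMdef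
  have hM1 : 1 ≤ M := by nlinarith
  have hMpos : (0 : ℝ) < M := lt_of_lt_of_le one_pos hM1
  refine ⟨M + 2 * B, by nlinarith, ?_⟩
  intro μ hμ hInt ρ hρ0 hρint hρ1 u hub hulip
  have hCuB : Cu ≤ B := le_trans (le_abs_self Cu) (by simp [hBdef])
  have huB : ∀ y, ‖u y‖ ≤ B := fun y => (hub y).trans hCuB
  have hLu : ∀ x y, ‖u x - u y‖ ≤ L * dist x y := by
    intro x y
    have h := hulip.dist_le_mul x y
    rw [dist_eq_norm] at h
    refine h.trans (mul_le_mul_of_nonneg_right ?_ dist_nonneg)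
    rw [Real.coe_toNNReal']
    have h1 := le_abs_self Lu
    have h2 := abs_nonneg Lu
    simp only [hLdef]
    rcases max_cases Lu 0 with ⟨he, _⟩ | ⟨he, _⟩ <;> rw [he] <;> linarith
  have hu_cont : Continuous u := hulip.continuous
  have hcoord : ∀ (x y : EuclideanSpace ℝ (Fin d)) (k : Fin d),
      |x k - y k| ≤ ‖x - y‖ := by
    intro x y k
    simpa [PiLp.sub_apply] using coord_abs_le (x - y) k
  have hproj : ∀ k : Fin d, Continuous (fun x : EuclideanSpace ℝ (Fin d) => x k) := by
    intro k
    refine LipschitzWith.continuous (K := 1) (LipschitzWith.of_dist_le_mul fun x y => ?_)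
    rw [Real.dist_eq, dist_eq_norm, NNReal.coe_one, one_mul]
    exact hcoord x y k
  have huiB : ∀ y k, |u y k| ≤ B := fun y k => (coord_abs_le (u y) k).trans (huB y)
  have huiL : ∀ x y k, |u x k - u y k| ≤ L * dist x y := fun x y k =>
    (hcoord _ _ k).trans (hLu x y)
  -- the two spatial measures
  set ρN := μ.map Prod.fst with hρN
  haveI : IsProbabilityMeasure ρN := Measure.isProbabilityMeasure_map measurable_fst.aemeasurable
  set ρm := volume.withDensity (fun y => ENNReal.ofReal (ρ y)) with hρm
  haveI : IsProbabilityMeasure ρm := by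
    constructor
    rw [hρm, withDensity_apply _ MeasurableSet.univ, setLIntegral_univ,
      ← ofReal_integral_eq_lintegral_ofReal hρint (ae_of_all _ hρ0), hρ1, ENNReal.ofReal_one]
  -- basic quantities
  set E := ∫ z, ‖z.2 - u z.1‖ ^ 2 ∂μ with hEdef
  have hE0 : 0 ≤ E := integral_nonneg fun z => sq_nonneg _
  have hsq0 : 0 ≤ Real.sqrt E := Real.sqrt_nonneg E
  have hg_cont : Continuous
      (fun z : EuclideanSpace ℝ (Fin d) × EuclideanSpace ℝ (Fin d) => z.2 - u z.1) :=
    continuous_snd.sub (hu_cont.comp continuous_fst)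
  have hgn_cont := hg_cont.norm
  have hbnd2 : Integrable (fun z : EuclideanSpace ℝ (Fin d) × EuclideanSpace ℝ (Fin d) =>
      2 * ‖z.2‖ ^ 2 + 2 * B ^ 2) μ := (hInt.const_mul 2).add (integrable_const _)
  have hng2 : Integrable (fun z : EuclideanSpace ℝ (Fin d) × EuclideanSpace ℝ (Fin d) =>
      ‖z.2 - u z.1‖ ^ 2) μ := by
    refine Integrable.mono' hbnd2
      ((hgn_cont.pow 2).aestronglyMeasurable) (ae_of_all _ fun z => ?_)
    have h1 : ‖z.2 - u z.1‖ ≤ ‖z.2‖ + B := (norm_sub_le _ _).trans (by linarith [huB z.1])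
    have h2 := norm_nonneg (z.2 - u z.1)
    have h3 := norm_nonneg z.2
    rw [Real.norm_eq_abs, abs_of_nonneg (sq_nonneg _)]
    nlinarith [mul_self_le_mul_self h2 h1, sq_nonneg (‖z.2‖ - B)]
  have hng1 : Integrable (fun z : EuclideanSpace ℝ (Fin d) × EuclideanSpace ℝ (Fin d) =>
      ‖z.2 - u z.1‖) μ := by
    have hbnd1 : Integrable (fun z : EuclideanSpace ℝ (Fin d) × EuclideanSpace ℝ (Fin d) =>
        ‖z.2 - u z.1‖ ^ 2 + 1) μ := hng2.add (integrable_const 1)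
    refine Integrable.mono' hbnd1
      hgn_cont.aestronglyMeasurable (ae_of_all _ fun z => ?_)
    rw [Real.norm_eq_abs, abs_of_nonneg (norm_nonneg _)]
    nlinarith [norm_nonneg (z.2 - u z.1)]
  have hmean : ∫ z, ‖z.2 - u z.1‖ ∂μ ≤ Real.sqrt E :=
    integral_le_sqrt_integral_sq μ _ (fun z => norm_nonneg _) hng1 hng2
  -- the dBL set is bounded above and its sup is nonnegative
  have hD0 : 0 ≤ dBL ρN ρm :=
    Real.sSup_nonneg (by rintro r ⟨φ, -, -, rfl⟩; exact abs_nonneg _)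
  have hDbdd : BddAbove { r : ℝ | ∃ φ : EuclideanSpace ℝ (Fin d) → ℝ,
      (∀ z, |φ z| ≤ 1) ∧ LipschitzWith 1 φ ∧
      r = |(∫ z, φ z ∂ρN) - ∫ z, φ z ∂ρm| } := by
    refine ⟨2, ?_⟩
    rintro r ⟨φ, hφb, hφl, rfl⟩
    have key : ∀ ν : Measure (EuclideanSpace ℝ (Fin d)), IsProbabilityMeasure ν →
        |∫ z, φ z ∂ν| ≤ 1 := by
      intro ν hν
      have := norm_integral_le_of_norm_le_const (μ := ν) (f := φ) (C := 1)
        (ae_of_all _ fun z => by simpa using hφb z)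
      simpa [measure_univ] using this
    have b1 := key ρN ‹_›
    have b2 := key ρm ‹_›
    calc |(∫ z, φ z ∂ρN) - ∫ z, φ z ∂ρm|
        ≤ |∫ z, φ z ∂ρN| + |∫ z, φ z ∂ρm| := abs_sub _ _
      _ ≤ 2 := by linarith
  -- main estimate
  refine Real.sSup_le ?_ (by positivity)
  rintro r ⟨i, j, φ, hφb, hφl, rfl⟩
  have hφc : Continuous φ := hφl.continuous
  -- the decomposition
  set f1 : EuclideanSpace ℝ (Fin d) × EuclideanSpace ℝ (Fin d) → ℝ :=
    fun z => φ z.1 * ((z.2 i - u z.1 i) * (z.2 j - u z.1 j)) with hf1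
  set f2 : EuclideanSpace ℝ (Fin d) × EuclideanSpace ℝ (Fin d) → ℝ :=
    fun z => φ z.1 * ((z.2 i - u z.1 i) * u z.1 j) with hf2
  set f3 : EuclideanSpace ℝ (Fin d) × EuclideanSpace ℝ (Fin d) → ℝ :=
    fun z => φ z.1 * (u z.1 i * (z.2 j - u z.1 j)) with hf3
  set f4 : EuclideanSpace ℝ (Fin d) × EuclideanSpace ℝ (Fin d) → ℝ :=
    fun z => φ z.1 * (u z.1 i * u z.1 j) with hf4
  have cφ : Continuous (fun z : EuclideanSpace ℝ (Fin d) × EuclideanSpace ℝ (Fin d) => φ z.1) :=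
    hφc.comp continuous_fst
  have cai : ∀ k : Fin d, Continuous
      (fun z : EuclideanSpace ℝ (Fin d) × EuclideanSpace ℝ (Fin d) => z.2 k - u z.1 k) :=
    fun k => ((hproj k).comp continuous_snd).sub ((hproj k).comp (hu_cont.comp continuous_fst))
  have cui : ∀ k : Fin d, Continuous
      (fun z : EuclideanSpace ℝ (Fin d) × EuclideanSpace ℝ (Fin d) => u z.1 k) :=
    fun k => (hproj k).comp (hu_cont.comp continuous_fst)
  have cont1 : Continuous f1 := cφ.mul ((cai i).mul (cai j))
  have cont2 : Continuous f2 := cφ.mul ((cai i).mul (cui j))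
  have cont3 : Continuous f3 := cφ.mul ((cui i).mul (cai j))
  have cont4 : Continuous f4 := cφ.mul ((cui i).mul (cui j))
  -- pointwise bounds
  have hb1 : ∀ z, |f1 z| ≤ ‖z.2 - u z.1‖ ^ 2 := by
    intro z
    have e1 := hcoord z.2 (u z.1) i
    have e2 := hcoord z.2 (u z.1) j
    have hp := hφb z.1
    have h : |f1 z| = |φ z.1| * (|z.2 i - u z.1 i| * |z.2 j - u z.1 j|) := by
      rw [hf1, abs_mul, abs_mul]
    rw [h]
    have hX : |z.2 i - u z.1 i| * |z.2 j - u z.1 j| ≤ ‖z.2 - u z.1‖ * ‖z.2 - u z.1‖ :=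
      mul_le_mul e1 e2 (abs_nonneg _) (norm_nonneg _)
    calc |φ z.1| * (|z.2 i - u z.1 i| * |z.2 j - u z.1 j|)
        ≤ 1 * (‖z.2 - u z.1‖ * ‖z.2 - u z.1‖) :=
          mul_le_mul hp hX (by positivity) one_pos.le
      _ = ‖z.2 - u z.1‖ ^ 2 := by ring
  have hb2 : ∀ z, |f2 z| ≤ B * ‖z.2 - u z.1‖ := by
    intro z
    have e1 := hcoord z.2 (u z.1) i
    have e2 := huiB z.1 j
    have hp := hφb z.1
    have h : |f2 z| = |φ z.1| * (|z.2 i - u z.1 i| * |u z.1 j|) := by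
      rw [hf2, abs_mul, abs_mul]
    rw [h]
    have hX : |z.2 i - u z.1 i| * |u z.1 j| ≤ ‖z.2 - u z.1‖ * B :=
      mul_le_mul e1 e2 (abs_nonneg _) (norm_nonneg _)
    calc |φ z.1| * (|z.2 i - u z.1 i| * |u z.1 j|)
        ≤ 1 * (‖z.2 - u z.1‖ * B) :=
          mul_le_mul hp hX (by positivity) one_pos.le
      _ = B * ‖z.2 - u z.1‖ := by ring
  have hb3 : ∀ z, |f3 z| ≤ B * ‖z.2 - u z.1‖ := by
    intro z
    have e1 := huiB z.1 i
    have e2 := hcoord z.2 (u z.1) j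
    have hp := hφb z.1
    have h : |f3 z| = |φ z.1| * (|u z.1 i| * |z.2 j - u z.1 j|) := by
      rw [hf3, abs_mul, abs_mul]
    rw [h]
    have hX : |u z.1 i| * |z.2 j - u z.1 j| ≤ B * ‖z.2 - u z.1‖ :=
      mul_le_mul e1 e2 (abs_nonneg _) (by linarith)
    calc |φ z.1| * (|u z.1 i| * |z.2 j - u z.1 j|)
        ≤ 1 * (B * ‖z.2 - u z.1‖) :=
          mul_le_mul hp hX (by positivity) one_pos.le
      _ = B * ‖z.2 - u z.1‖ := by ring
  have hb4 : ∀ z, |f4 z| ≤ B ^ 2 := by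
    intro z
    have e1 := huiB z.1 i
    have e2 := huiB z.1 j
    have hp := hφb z.1
    have h : |f4 z| = |φ z.1| * (|u z.1 i| * |u z.1 j|) := by
      rw [hf4, abs_mul, abs_mul]
    rw [h]
    have hX : |u z.1 i| * |u z.1 j| ≤ B * B :=
      mul_le_mul e1 e2 (abs_nonneg _) (by linarith)
    calc |φ z.1| * (|u z.1 i| * |u z.1 j|)
        ≤ 1 * (B * B) := mul_le_mul hp hX (by positivity) one_pos.le
      _ = B ^ 2 := by ring
  -- integrability
  have If1 : Integrable f1 μ := hng2.mono' cont1.aestronglyMeasurable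
    (ae_of_all _ fun z => by rw [Real.norm_eq_abs]; exact hb1 z)
  have If2 : Integrable f2 μ := (hng1.const_mul B).mono' cont2.aestronglyMeasurable
    (ae_of_all _ fun z => by rw [Real.norm_eq_abs]; exact hb2 z)
  have If3 : Integrable f3 μ := (hng1.const_mul B).mono' cont3.aestronglyMeasurable
    (ae_of_all _ fun z => by rw [Real.norm_eq_abs]; exact hb3 z)
  have If4 : Integrable f4 μ := (integrable_const (B ^ 2)).mono' cont4.aestronglyMeasurable
    (ae_of_all _ fun z => by rw [Real.norm_eq_abs]; exact hb4 z)
  -- split the integral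
  have hsplit : ∫ z, φ z.1 * (z.2 i * z.2 j) ∂μ
      = (∫ z, f1 z ∂μ) + (∫ z, f2 z ∂μ) + (∫ z, f3 z ∂μ) + ∫ z, f4 z ∂μ := by
    have hpt : (fun z : EuclideanSpace ℝ (Fin d) × EuclideanSpace ℝ (Fin d) =>
        φ z.1 * (z.2 i * z.2 j)) = fun z => f1 z + f2 z + f3 z + f4 z := by
      funext z
      simp only [hf1, hf2, hf3, hf4]
      ring
    have I12 : Integrable (fun z => f1 z + f2 z) μ := If1.add If2
    have I123 : Integrable (fun z => f1 z + f2 z + f3 z) μ := I12.add If3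
    have e1 : ∫ z, f1 z + f2 z + f3 z + f4 z ∂μ
        = (∫ z, f1 z + f2 z + f3 z ∂μ) + ∫ z, f4 z ∂μ := integral_add I123 If4
    have e2 : ∫ z, f1 z + f2 z + f3 z ∂μ
        = (∫ z, f1 z + f2 z ∂μ) + ∫ z, f3 z ∂μ := integral_add I12 If3
    have e3 : ∫ z, f1 z + f2 z ∂μ
        = (∫ z, f1 z ∂μ) + ∫ z, f2 z ∂μ := integral_add If1 If2
    rw [hpt, e1, e2, e3]
  -- bounds on the first three integrals
  have habs1 : |∫ z, f1 z ∂μ| ≤ E := by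
    calc |∫ z, f1 z ∂μ| ≤ ∫ z, |f1 z| ∂μ := by
          simpa [Real.norm_eq_abs] using norm_integral_le_integral_norm (μ := μ) f1
      _ ≤ ∫ z, ‖z.2 - u z.1‖ ^ 2 ∂μ := integral_mono If1.abs hng2 fun z => hb1 z
  have habs2 : |∫ z, f2 z ∂μ| ≤ B * Real.sqrt E := by
    calc |∫ z, f2 z ∂μ| ≤ ∫ z, |f2 z| ∂μ := by
          simpa [Real.norm_eq_abs] using norm_integral_le_integral_norm (μ := μ) f2
      _ ≤ ∫ z, B * ‖z.2 - u z.1‖ ∂μ := integral_mono If2.abs (hng1.const_mul B) fun z => hb2 z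
      _ = B * ∫ z, ‖z.2 - u z.1‖ ∂μ := integral_const_mul _ _
      _ ≤ B * Real.sqrt E := mul_le_mul_of_nonneg_left hmean (by linarith)
  have habs3 : |∫ z, f3 z ∂μ| ≤ B * Real.sqrt E := by
    calc |∫ z, f3 z ∂μ| ≤ ∫ z, |f3 z| ∂μ := by
          simpa [Real.norm_eq_abs] using norm_integral_le_integral_norm (μ := μ) f3
      _ ≤ ∫ z, B * ‖z.2 - u z.1‖ ∂μ := integral_mono If3.abs (hng1.const_mul B) fun z => hb3 z
      _ = B * ∫ z, ‖z.2 - u z.1‖ ∂μ := integral_const_mul _ _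
      _ ≤ B * Real.sqrt E := mul_le_mul_of_nonneg_left hmean (by linarith)
  -- the test function ψ
  set ψ : EuclideanSpace ℝ (Fin d) → ℝ := fun y => φ y * (u y i * u y j) with hψdef
  have hψc : Continuous ψ := hφc.mul (((hproj i).comp hu_cont).mul ((hproj j).comp hu_cont))
  have hψb : ∀ y, |ψ y| ≤ M := by
    intro y
    have hp := hφb y
    have h1 := huiB y i
    have h2 := huiB y j
    have h : |ψ y| = |φ y| * (|u y i| * |u y j|) := by rw [hψdef, abs_mul, abs_mul]
    rw [h]
    have hX : |u y i| * |u y j| ≤ B * B :=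
      mul_le_mul h1 h2 (abs_nonneg _) (by linarith)
    have : |φ y| * (|u y i| * |u y j|) ≤ 1 * (B * B) :=
      mul_le_mul hp hX (by positivity) one_pos.le
    nlinarith [hL1, hB1]
  have hψlip : ∀ x y, |ψ x - ψ y| ≤ M * dist x y := by
    intro x y
    have hφd : |φ x - φ y| ≤ dist x y := by
      have := hφl.dist_le_mul x y
      rwa [Real.dist_eq, NNReal.coe_one, one_mul] at this
    have h1 := huiB x i
    have h2 := huiB x j
    have h3 := huiB y j
    have h4 := huiL x y j
    have h5 := huiL x y i
    have hφy := hφb y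
    have hidentity : ψ x - ψ y
        = (φ x - φ y) * (u x i * u x j) + φ y * (u x i * (u x j - u y j))
          + φ y * (u y j * (u x i - u y i)) := by
      rw [hψdef]; ring
    have step : |ψ x - ψ y|
        ≤ |φ x - φ y| * (|u x i| * |u x j|) + |φ y| * (|u x i| * |u x j - u y j|)
          + |φ y| * (|u y j| * |u x i - u y i|) := by
      rw [hidentity]
      calc |(φ x - φ y) * (u x i * u x j) + φ y * (u x i * (u x j - u y j))
            + φ y * (u y j * (u x i - u y i))|
          ≤ |(φ x - φ y) * (u x i * u x j) + φ y * (u x i * (u x j - u y j))|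
            + |φ y * (u y j * (u x i - u y i))| := abs_add_le _ _
        _ ≤ |(φ x - φ y) * (u x i * u x j)| + |φ y * (u x i * (u x j - u y j))|
            + |φ y * (u y j * (u x i - u y i))| := by
            have := abs_add_le ((φ x - φ y) * (u x i * u x j))
              (φ y * (u x i * (u x j - u y j)))
            linarith
        _ = _ := by rw [abs_mul, abs_mul, abs_mul, abs_mul, abs_mul, abs_mul]
    refine step.trans ?_
    have hd0 := dist_nonneg (x := x) (y := y)
    have hB0 : (0 : ℝ) ≤ B := by linarith
    have h1' : |φ x - φ y| * (|u x i| * |u x j|) ≤ dist x y * (B * B) :=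
      mul_le_mul hφd (mul_le_mul h1 h2 (abs_nonneg _) hB0) (by positivity) hd0
    have h2' : |φ y| * (|u x i| * |u x j - u y j|) ≤ 1 * (B * (L * dist x y)) :=
      mul_le_mul hφy (mul_le_mul h1 h4 (abs_nonneg _) hB0) (by positivity) one_pos.le
    have h3' : |φ y| * (|u y j| * |u x i - u y i|) ≤ 1 * (B * (L * dist x y)) :=
      mul_le_mul hφy (mul_le_mul h3 h5 (abs_nonneg _) hB0) (by positivity) one_pos.le
    have hMeq : dist x y * (B * B) + 1 * (B * (L * dist x y)) + 1 * (B * (L * dist x y))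
        = M * dist x y := by rw [hMdef]; ring
    linarith
  -- relate the two integrals of ψ to the statement
  have hψmap : ∫ y, ψ y ∂ρN = ∫ z, f4 z ∂μ := by
    rw [hρN]
    exact integral_map measurable_fst.aemeasurable hψc.aestronglyMeasurable
  have hψm : ∫ y, ψ y ∂ρm = ∫ y, φ y * (ρ y * (u y i * u y j)) := by
    have hρae : AEMeasurable (fun y => (ρ y).toNNReal) (volume :
        Measure (EuclideanSpace ℝ (Fin d))) :=
      measurable_real_toNNReal.comp_aemeasurable hρint.aemeasurable
    have hcoe : (fun y => ENNReal.ofReal (ρ y))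
        = fun y => ((ρ y).toNNReal : ℝ≥0∞) := rfl
    rw [hρm, hcoe, integral_withDensity_eq_integral_smul₀ hρae]
    congr 1
    funext y
    rw [NNReal.smul_def, smul_eq_mul, Real.coe_toNNReal _ (hρ0 y), hψdef]
    ring
  -- the dBL bound for the ψ term
  have hdBL : |(∫ y, ψ y ∂ρN) - ∫ y, ψ y ∂ρm| ≤ M * dBL ρN ρm := by
    have hmem : |(∫ y, M⁻¹ * ψ y ∂ρN) - ∫ y, M⁻¹ * ψ y ∂ρm|
        ∈ { r : ℝ | ∃ φ' : EuclideanSpace ℝ (Fin d) → ℝ,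
          (∀ z, |φ' z| ≤ 1) ∧ LipschitzWith 1 φ' ∧
          r = |(∫ z, φ' z ∂ρN) - ∫ z, φ' z ∂ρm| } := by
      refine ⟨fun y => M⁻¹ * ψ y, fun y => ?_, ?_, rfl⟩
      · rw [abs_mul, abs_inv, abs_of_pos hMpos]
        calc M⁻¹ * |ψ y| ≤ M⁻¹ * M :=
              mul_le_mul_of_nonneg_left (hψb y) (inv_nonneg.mpr hMpos.le)
          _ = 1 := inv_mul_cancel₀ hMpos.ne'
      · refine LipschitzWith.of_dist_le_mul fun x y => ?_
        rw [Real.dist_eq, NNReal.coe_one, one_mul]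
        have h : M⁻¹ * ψ x - M⁻¹ * ψ y = M⁻¹ * (ψ x - ψ y) := by ring
        rw [h, abs_mul, abs_inv, abs_of_pos hMpos]
        calc M⁻¹ * |ψ x - ψ y| ≤ M⁻¹ * (M * dist x y) :=
              mul_le_mul_of_nonneg_left (hψlip x y) (inv_nonneg.mpr hMpos.le)
          _ = dist x y := by field_simp
    have hle : |(∫ y, M⁻¹ * ψ y ∂ρN) - ∫ y, M⁻¹ * ψ y ∂ρm| ≤ dBL ρN ρm :=
      le_csSup hDbdd hmem
    rw [integral_const_mul, integral_const_mul, ← mul_sub, abs_mul, abs_inv,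
      abs_of_pos hMpos] at hle
    calc |(∫ y, ψ y ∂ρN) - ∫ y, ψ y ∂ρm|
        = M * (M⁻¹ * |(∫ y, ψ y ∂ρN) - ∫ y, ψ y ∂ρm|) := by field_simp
      _ ≤ M * dBL ρN ρm := mul_le_mul_of_nonneg_left hle hMpos.le
  -- assemble
  have hterm4 : |(∫ z, f4 z ∂μ) - ∫ y, φ y * (ρ y * (u y i * u y j))| ≤ M * dBL ρN ρm := by
    rw [← hψmap, ← hψm]; exact hdBL
  rw [hsplit]
  have habs : |(∫ z, f1 z ∂μ) + (∫ z, f2 z ∂μ) + (∫ z, f3 z ∂μ) + (∫ z, f4 z ∂μ)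
      - ∫ y, φ y * (ρ y * (u y i * u y j))|
      ≤ |∫ z, f1 z ∂μ| + |∫ z, f2 z ∂μ| + |∫ z, f3 z ∂μ|
        + |(∫ z, f4 z ∂μ) - ∫ y, φ y * (ρ y * (u y i * u y j))| := by
    set A1 := ∫ z, f1 z ∂μ
    set A2 := ∫ z, f2 z ∂μ
    set A3 := ∫ z, f3 z ∂μ
    set A4 := (∫ z, f4 z ∂μ) - ∫ y, φ y * (ρ y * (u y i * u y j))
    have e : A1 + A2 + A3 + (∫ z, f4 z ∂μ) - ∫ y, φ y * (ρ y * (u y i * u y j))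
        = A1 + A2 + A3 + A4 := by ring
    rw [e]
    calc |A1 + A2 + A3 + A4| ≤ |A1 + A2 + A3| + |A4| := abs_add_le _ _
      _ ≤ (|A1 + A2| + |A3|) + |A4| := by linarith [abs_add_le (A1 + A2) A3]
      _ ≤ ((|A1| + |A2|) + |A3|) + |A4| := by linarith [abs_add_le A1 A2]
      _ = |A1| + |A2| + |A3| + |A4| := by ring
  refine habs.trans ?_
  have hfinal : |∫ z, f1 z ∂μ| + |∫ z, f2 z ∂μ| + |∫ z, f3 z ∂μ|
      + |(∫ z, f4 z ∂μ) - ∫ y, φ y * (ρ y * (u y i * u y j))|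
      ≤ E + (B * Real.sqrt E + B * Real.sqrt E) + M * dBL ρN ρm := by
    linarith
  refine hfinal.trans ?_
  have hBM : 0 ≤ B := by linarith
  nlinarith [hsq0, hD0, hM1, hB1]
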